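/- Let n ≥ 2, m ≥ 1, C > 0, and for J = 1,…,m let k_J ∈ {1,…,n} and p_J ∈ [1,∞). Suppose f_J : ℝ^{k_J} → [0,∞] are measurable and that for every ρ > 0 one has ∫_{S^{n−1}} ∏_J f_J(ρ·π_J(x')) dσ(x') ≤ C·∏_J ‖f_J(ρ·)‖_{L^{p_J}(B_{k_J})}, where π_J : ℝ^n → ℝ^{k_J} is a coordinate projection and B_{k_J} the unit ball. If Σ_J k_J/p_J < n, then for all R > 0: ∫_{B(0,R)} ∏_J f_J(π_J x) dx ≤ C'·R^{δ}·∏_J ‖f_J‖_{L^{p_J}(ℝ^{k_J})}, where δ = n − Σ_J k_J/p_J and C' depends only on n, C, and the p_J, k_J. -/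

import Mathlib

open MeasureTheory Metric

private lemma polar_lintegral {E : Type*} [NormedAddCommGroup E] [NormedSpace ℝ E] [MeasurableSpace E]
    [BorelSpace E] [FiniteDimensional ℝ E] [Nontrivial E] (μ : Measure E) [μ.IsAddHaarMeasure]
    (G : E → ENNReal) (hG : Measurable G) :
    ∫⁻ x, G x ∂μ = ∫⁻ r : Set.Ioi (0:ℝ),
        (∫⁻ x' : sphere (0 : E) 1, G ((r:ℝ) • (x':E)) ∂μ.toSphere)
      ∂(Measure.volumeIoiPow (Module.finrank ℝ E - 1)) := by
  have mp := μ.measurePreserving_homeomorphUnitSphereProd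
  have hg : Measurable (fun q : sphere (0:E) 1 × Set.Ioi (0:ℝ) => G ((q.2:ℝ) • (q.1:E))) :=
    hG.comp ((continuous_subtype_val.comp continuous_snd).smul
      (continuous_subtype_val.comp continuous_fst)).measurable
  calc ∫⁻ x, G x ∂μ = ∫⁻ x in ({0}ᶜ : Set E), G x ∂μ := by
        rw [← lintegral_indicator (measurableSet_singleton (0:E)).compl]
        apply lintegral_congr_ae
        filter_upwards [(ae_iff.2 (by simp) : ∀ᵐ x ∂μ, ¬ x = (0:E))] with x hx
        simp [Set.indicator_of_mem, hx]
    _ = ∫⁻ x : ({0}ᶜ : Set E), G x ∂(μ.comap Subtype.val) := by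
        rw [lintegral_subtype_comap (measurableSet_singleton (0:E)).compl]
    _ = ∫⁻ q : sphere (0:E) 1 × Set.Ioi (0:ℝ), G ((q.2:ℝ) • (q.1:E))
          ∂(μ.toSphere.prod (Measure.volumeIoiPow (Module.finrank ℝ E - 1))) := by
        rw [← mp.lintegral_comp hg]
        apply lintegral_congr
        intro x
        have h2 : ((homeomorphUnitSphereProd E).symm ((homeomorphUnitSphereProd E) x) : E) = x := by
          rw [Homeomorph.symm_apply_apply]
        rw [show ((((homeomorphUnitSphereProd E) x).2 : ℝ) • (((homeomorphUnitSphereProd E) x).1 : E)) =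
            ((homeomorphUnitSphereProd E).symm ((homeomorphUnitSphereProd E) x) : E) by
          simp [homeomorphUnitSphereProd]
          rw [smul_smul, mul_inv_cancel₀ (norm_ne_zero_iff.2 x.2), one_smul]]
        rw [h2]
    _ = _ := lintegral_prod_symm _ hg.aemeasurable

private lemma scaling_lintegral (k : ℕ) (g : EuclideanSpace ℝ (Fin k) → ENNReal) (hg : Measurable g)
    (r : ℝ) (hr : 0 < r) :
    ∫⁻ y in ball (0 : EuclideanSpace ℝ (Fin k)) 1, g (r • y) ≤
      ENNReal.ofReal (r ^ (-(k:ℝ))) * ∫⁻ y, g y := by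
  have hmap : Measure.map (r • ·) (volume : Measure (EuclideanSpace ℝ (Fin k))) =
      ENNReal.ofReal (abs (r ^ Module.finrank ℝ (EuclideanSpace ℝ (Fin k)))⁻¹) • volume :=
    Measure.map_addHaar_smul _ hr.ne'
  have h1 : ∫⁻ y in ball (0 : EuclideanSpace ℝ (Fin k)) 1, g (r • y) =
      ∫⁻ y, (ball (0 : EuclideanSpace ℝ (Fin k)) r).indicator g (r • y) := by
    rw [← lintegral_indicator measurableSet_ball]
    congr 1
    ext y
    by_cases h : y ∈ ball (0 : EuclideanSpace ℝ (Fin k)) 1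
    · have : r • y ∈ ball (0 : EuclideanSpace ℝ (Fin k)) r := by
        simpa [norm_smul, abs_of_pos hr] using (mul_lt_of_lt_one_right hr (by simpa using h))
      simp [Set.indicator_of_mem h, Set.indicator_of_mem this]
    · have : r • y ∉ ball (0 : EuclideanSpace ℝ (Fin k)) r := by
        simp only [mem_ball, dist_zero_right, not_lt] at h ⊢
        calc r = r * 1 := (mul_one r).symm
        _ ≤ r * ‖y‖ := by nlinarith
        _ = ‖r • y‖ := by rw [norm_smul, Real.norm_eq_abs, abs_of_pos hr]
      simp [Set.indicator_of_notMem h, Set.indicator_of_notMem this]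
  rw [h1, ← lintegral_map (hg.indicator measurableSet_ball) (measurable_const_smul r), hmap]
  rw [lintegral_smul_measure, lintegral_indicator measurableSet_ball]
  calc ENNReal.ofReal |(r ^ Module.finrank ℝ (EuclideanSpace ℝ (Fin k)))⁻¹| *
        ∫⁻ y in ball (0 : EuclideanSpace ℝ (Fin k)) r, g y
      ≤ ENNReal.ofReal (r ^ (-(k:ℝ))) * ∫⁻ y, g y := by
        gcongr
        · rw [finrank_euclideanSpace_fin, abs_of_pos (inv_pos.2 (pow_pos hr _)), ← Real.rpow_natCast r k,
            ← Real.rpow_neg hr.le]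
        · exact Measure.restrict_le_self

private lemma radial_lintegral (δ R : ℝ) (hδ : 0 < δ) (hR : 0 < R) :
    ∫⁻ r in Set.Ioo (0:ℝ) R, ENNReal.ofReal (r ^ (δ-1)) = ENNReal.ofReal (R ^ δ / δ) := by
  have hint : IntervalIntegrable (fun r : ℝ => r ^ (δ-1)) volume 0 R :=
    intervalIntegral.intervalIntegrable_rpow' (by linarith)
  rw [Measure.restrict_congr_set MeasureTheory.Ioo_ae_eq_Ioc,
    ← ofReal_integral_eq_lintegral_ofReal]
  · rw [← intervalIntegral.integral_of_le hR.le,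
      integral_rpow (Or.inl (by linarith))]
    rw [sub_add_cancel, Real.zero_rpow hδ.ne']
    norm_num
  · exact (intervalIntegrable_iff_integrableOn_Ioc_of_le hR.le).mp hint
  · filter_upwards [ae_restrict_mem measurableSet_Ioc] with x hx
    exact Real.rpow_nonneg hx.1.le _

/-- From a spherical Brascamp–Lieb inequality to a local Euclidean one: if for
every `ρ > 0` the product of the pullbacks `f_J ∘ π_J` integrated over the unit
sphere (normalized measure) is bounded by `C` times the product of the
`L^{p_J}` norms of the dilates `f_J(ρ·)` on unit balls, and `Σ_J k_J/p_J < n`,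
then integration over the ball `B(0,R)` yields the bound
`C'·R^δ·∏_J ‖f_J‖_{L^{p_J}(ℝ^{k_J})}` with `δ = n − Σ_J k_J/p_J`, for a
constant `C'` depending only on `n`, `C`, and the `p_J`, `k_J`. -/
theorem stmt_13 (n m : ℕ) (hn : 2 ≤ n) (hm : 1 ≤ m) (C : ℝ) (hC : 0 < C)
    (k : Fin m → ℕ) (hk : ∀ J, 1 ≤ k J ∧ k J ≤ n)
    (p : Fin m → ℝ) (hp : ∀ J, 1 ≤ p J)
    (ι : ∀ J, Fin (k J) → Fin n) (hι : ∀ J, Function.Injective (ι J))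
    (hδ : ∑ J, (k J : ℝ) / p J < (n : ℝ)) :
    ∃ C' > (0 : ℝ),
      ∀ f : ∀ J, EuclideanSpace ℝ (Fin (k J)) → ENNReal,
        (∀ J, Measurable (f J)) →
        (∀ ρ : ℝ, 0 < ρ →
          (∫⁻ x' , ∏ J, f J (WithLp.toLp 2 (fun i => ρ *
              ((x' : EuclideanSpace ℝ (Fin n)) (ι J i))))
            ∂(((volume : Measure (EuclideanSpace ℝ (Fin n))).toSphere
                Set.univ)⁻¹ •
              (volume : Measure (EuclideanSpace ℝ (Fin n))).toSphere)) ≤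
            ENNReal.ofReal C *
              ∏ J, (∫⁻ y in ball (0 : EuclideanSpace ℝ (Fin (k J))) 1,
                  f J (ρ • y) ^ p J) ^ (1 / p J)) →
        ∀ R : ℝ, 0 < R →
          ∫⁻ x in ball (0 : EuclideanSpace ℝ (Fin n)) R,
              ∏ J, f J (WithLp.toLp 2 (fun i => x (ι J i))) ≤
            ENNReal.ofReal (C' * R ^ ((n : ℝ) - ∑ J, (k J : ℝ) / p J)) *
              ∏ J, (∫⁻ y, f J y ^ p J) ^ (1 / p J) := by
  -- notation
  set σ : ℝ := ∑ J, (k J : ℝ) / p J with hσ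
  have hσ0 : 0 ≤ σ := Finset.sum_nonneg fun J _ =>
    div_nonneg (Nat.cast_nonneg _) (le_trans zero_le_one (hp J))
  set δ : ℝ := (n : ℝ) - σ with hδdef
  have hδpos : 0 < δ := by simp only [hδdef]; linarith
  haveI : Nontrivial (EuclideanSpace ℝ (Fin n)) :=
    Module.nontrivial_of_finrank_pos (R := ℝ)
      (by rw [finrank_euclideanSpace_fin]; omega)
  set c : ENNReal := (volume : Measure (EuclideanSpace ℝ (Fin n))).toSphere Set.univ with hcdef
  have hctop : c ≠ ⊤ := measure_ne_top _ _
  have hc0 : c ≠ 0 := by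
    rw [hcdef, Measure.toSphere_apply_univ, finrank_euclideanSpace_fin]
    exact mul_ne_zero (by exact_mod_cast (by omega : n ≠ 0))
      (measure_ball_pos volume 0 one_pos).ne'
  refine ⟨c.toReal * C / δ, div_pos (mul_pos (ENNReal.toReal_pos hc0 hctop) hC) hδpos, ?_⟩
  intro f hf hsph R hR
  -- the product function and its measurability
  set F : EuclideanSpace ℝ (Fin n) → ENNReal :=
    fun x => ∏ J, f J (WithLp.toLp 2 (fun i => x (ι J i))) with hF
  have hπ : ∀ J, Measurable (fun x : EuclideanSpace ℝ (Fin n) =>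
      (WithLp.toLp 2 (fun i => x (ι J i)) : EuclideanSpace ℝ (Fin (k J)))) := fun J => by
    apply Continuous.measurable; fun_prop
  have hFm : Measurable F := Finset.measurable_prod _ fun J _ => (hf J).comp (hπ J)
  set G : EuclideanSpace ℝ (Fin n) → ENNReal := (ball (0:EuclideanSpace ℝ (Fin n)) R).indicator F
    with hG
  have hGm : Measurable G := hFm.indicator measurableSet_ball
  set P : ENNReal := ∏ J, (∫⁻ y, f J y ^ p J) ^ (1 / p J) with hP
  -- key pointwise bound for the spherical integral
  have key : ∀ r : ℝ, 0 < r →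
      (∫⁻ x' : sphere (0:EuclideanSpace ℝ (Fin n)) 1, F (r • (x' : EuclideanSpace ℝ (Fin n)))
        ∂(volume : Measure (EuclideanSpace ℝ (Fin n))).toSphere) ≤
      c * ENNReal.ofReal C * ENNReal.ofReal (r ^ (-σ)) * P := by
    intro r hr
    have hs := hsph r hr
    rw [lintegral_smul_measure] at hs
    have hinteq : (∫⁻ x' : sphere (0:EuclideanSpace ℝ (Fin n)) 1,
        ∏ J, f J (WithLp.toLp 2 (fun i => r * ((x' : EuclideanSpace ℝ (Fin n)) (ι J i))))
        ∂(volume : Measure (EuclideanSpace ℝ (Fin n))).toSphere) =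
        ∫⁻ x' : sphere (0:EuclideanSpace ℝ (Fin n)) 1, F (r • (x' : EuclideanSpace ℝ (Fin n)))
        ∂(volume : Measure (EuclideanSpace ℝ (Fin n))).toSphere := by
      refine lintegral_congr fun x' => ?_
      simp only [hF]
      refine Finset.prod_congr rfl fun J _ => rfl
    rw [hinteq] at hs
    -- from  c⁻¹ * S ≤ ofReal C * Q  deduce  S ≤ c * ofReal C * Q
    have hS : (∫⁻ x' : sphere (0:EuclideanSpace ℝ (Fin n)) 1,
        F (r • (x' : EuclideanSpace ℝ (Fin n)))
        ∂(volume : Measure (EuclideanSpace ℝ (Fin n))).toSphere) ≤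
        c * (ENNReal.ofReal C *
          ∏ J, (∫⁻ y in ball (0 : EuclideanSpace ℝ (Fin (k J))) 1,
            f J (r • y) ^ p J) ^ (1 / p J)) := by
      calc (∫⁻ x' : sphere (0:EuclideanSpace ℝ (Fin n)) 1,
            F (r • (x' : EuclideanSpace ℝ (Fin n)))
            ∂(volume : Measure (EuclideanSpace ℝ (Fin n))).toSphere)
          = c * (c⁻¹ * ∫⁻ x' : sphere (0:EuclideanSpace ℝ (Fin n)) 1,
            F (r • (x' : EuclideanSpace ℝ (Fin n)))
            ∂(volume : Measure (EuclideanSpace ℝ (Fin n))).toSphere) := by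
            rw [← mul_assoc, ENNReal.mul_inv_cancel hc0 hctop, one_mul]
        _ ≤ _ := by exact mul_le_mul_right hs c
    refine hS.trans ?_
    -- now bound the dilated L^p norms using scaling
    have hQ : ∀ J, (∫⁻ y in ball (0 : EuclideanSpace ℝ (Fin (k J))) 1,
        f J (r • y) ^ p J) ^ (1 / p J) ≤
        ENNReal.ofReal (r ^ (-((k J : ℝ) / p J))) * (∫⁻ y, f J y ^ p J) ^ (1 / p J) := by
      intro J
      have hp1 : 0 < p J := lt_of_lt_of_le one_pos (hp J)
      have hscal := scaling_lintegral (k J) (fun y => f J y ^ p J)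
        ((hf J).pow_const _) r hr
      calc (∫⁻ y in ball (0 : EuclideanSpace ℝ (Fin (k J))) 1, f J (r • y) ^ p J) ^ (1 / p J)
          ≤ (ENNReal.ofReal (r ^ (-((k J):ℝ))) * ∫⁻ y, f J y ^ p J) ^ (1 / p J) :=
            ENNReal.rpow_le_rpow hscal (by positivity)
        _ = (ENNReal.ofReal (r ^ (-((k J):ℝ)))) ^ (1 / p J) * (∫⁻ y, f J y ^ p J) ^ (1 / p J) :=
            ENNReal.mul_rpow_of_nonneg _ _ (by positivity)
        _ = ENNReal.ofReal (r ^ (-((k J : ℝ) / p J))) * (∫⁻ y, f J y ^ p J) ^ (1 / p J) := by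
            rw [ENNReal.ofReal_rpow_of_pos (Real.rpow_pos_of_pos hr _),
              ← Real.rpow_mul hr.le]
            congr 2
            ring
    calc c * (ENNReal.ofReal C *
          ∏ J, (∫⁻ y in ball (0 : EuclideanSpace ℝ (Fin (k J))) 1,
            f J (r • y) ^ p J) ^ (1 / p J))
        ≤ c * (ENNReal.ofReal C *
          ∏ J, ENNReal.ofReal (r ^ (-((k J : ℝ) / p J))) * (∫⁻ y, f J y ^ p J) ^ (1 / p J)) := by
          gcongr with J
          exact hQ J
      _ = c * ENNReal.ofReal C * ENNReal.ofReal (r ^ (-σ)) * P := by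
          rw [Finset.prod_mul_distrib, ← ENNReal.ofReal_prod_of_nonneg
            (fun J _ => Real.rpow_nonneg hr.le _)]
          rw [show (∏ J, r ^ (-((k J : ℝ) / p J))) = r ^ (-σ) by
            rw [hσ, ← Finset.sum_neg_distrib, Real.rpow_sum_of_pos hr]]
          rw [hP]
          ring
  -- pass to polar coordinates
  have hball : ∫⁻ x in ball (0:EuclideanSpace ℝ (Fin n)) R, F x = ∫⁻ x, G x := by
    rw [hG, lintegral_indicator measurableSet_ball]
  have hpolar := polar_lintegral (volume : Measure (EuclideanSpace ℝ (Fin n))) G hGm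
  rw [finrank_euclideanSpace_fin] at hpolar
  -- pointwise bound of the inner spherical integral
  set ψ : Set.Ioi (0:ℝ) → ENNReal := fun r =>
    if (r:ℝ) < R then ENNReal.ofReal ((r:ℝ) ^ (-σ)) else 0 with hψdef
  have hbound : ∀ r : Set.Ioi (0:ℝ),
      (∫⁻ x' : sphere (0:EuclideanSpace ℝ (Fin n)) 1,
        G ((r:ℝ) • (x' : EuclideanSpace ℝ (Fin n)))
        ∂(volume : Measure (EuclideanSpace ℝ (Fin n))).toSphere) ≤
      c * ENNReal.ofReal C * P * ψ r := by
    intro r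
    have hr : (0:ℝ) < r := r.2
    by_cases h : (r:ℝ) < R
    · have : ∀ x' : sphere (0:EuclideanSpace ℝ (Fin n)) 1,
          G ((r:ℝ) • (x' : EuclideanSpace ℝ (Fin n))) =
          F ((r:ℝ) • (x' : EuclideanSpace ℝ (Fin n))) := by
        intro x'
        have hx' : ‖(x' : EuclideanSpace ℝ (Fin n))‖ = 1 := norm_eq_of_mem_sphere x'
        have : (r:ℝ) • (x' : EuclideanSpace ℝ (Fin n)) ∈ ball (0:EuclideanSpace ℝ (Fin n)) R := by
          rw [mem_ball, dist_zero_right, norm_smul, hx', Real.norm_eq_abs, abs_of_pos hr, mul_one]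
          exact h
        rw [hG, Set.indicator_of_mem this]
      calc (∫⁻ x' : sphere (0:EuclideanSpace ℝ (Fin n)) 1,
            G ((r:ℝ) • (x' : EuclideanSpace ℝ (Fin n)))
            ∂(volume : Measure (EuclideanSpace ℝ (Fin n))).toSphere)
          = ∫⁻ x' : sphere (0:EuclideanSpace ℝ (Fin n)) 1,
            F ((r:ℝ) • (x' : EuclideanSpace ℝ (Fin n)))
            ∂(volume : Measure (EuclideanSpace ℝ (Fin n))).toSphere :=
            lintegral_congr fun x' => this x'
        _ ≤ c * ENNReal.ofReal C * ENNReal.ofReal ((r:ℝ) ^ (-σ)) * P := key r hr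
        _ = c * ENNReal.ofReal C * P * ψ r := by rw [hψdef]; simp only [if_pos h]; ring
    · have : ∀ x' : sphere (0:EuclideanSpace ℝ (Fin n)) 1,
          G ((r:ℝ) • (x' : EuclideanSpace ℝ (Fin n))) = 0 := by
        intro x'
        have hx' : ‖(x' : EuclideanSpace ℝ (Fin n))‖ = 1 := norm_eq_of_mem_sphere x'
        have hnot : (r:ℝ) • (x' : EuclideanSpace ℝ (Fin n)) ∉ ball (0:EuclideanSpace ℝ (Fin n)) R := by
          rw [mem_ball, dist_zero_right, norm_smul, hx', Real.norm_eq_abs, abs_of_pos hr, mul_one]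
          exact h
        rw [hG, Set.indicator_of_notMem hnot]
      rw [show (∫⁻ x' : sphere (0:EuclideanSpace ℝ (Fin n)) 1,
            G ((r:ℝ) • (x' : EuclideanSpace ℝ (Fin n)))
            ∂(volume : Measure (EuclideanSpace ℝ (Fin n))).toSphere) = 0 by
        rw [lintegral_congr fun x' => this x', lintegral_zero]]
      exact zero_le
  -- measurability of ψ
  have hcont : Continuous (fun r : Set.Ioi (0:ℝ) => ENNReal.ofReal ((r:ℝ) ^ (-σ))) := by
    apply Continuous.comp ENNReal.continuous_ofReal
    rw [continuous_iff_continuousAt]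
    intro r
    exact (Real.continuousAt_rpow_const _ _ (Or.inl (ne_of_gt r.2))).comp
      continuous_subtype_val.continuousAt
  have hψm : Measurable ψ := by
    apply Measurable.ite
    · exact measurableSet_lt measurable_subtype_coe measurable_const
    · exact hcont.measurable
    · exact measurable_const
  -- compute the radial integral
  set φ : ℝ → ENNReal := fun t => ENNReal.ofReal (t ^ (n-1)) *
      (if t < R then ENNReal.ofReal (t ^ (-σ)) else 0) with hφdef
  have hrad : ∫⁻ r : Set.Ioi (0:ℝ), ψ r ∂(Measure.volumeIoiPow (n-1)) =
      ENNReal.ofReal (R ^ δ / δ) := by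
    calc ∫⁻ r : Set.Ioi (0:ℝ), ψ r ∂(Measure.volumeIoiPow (n-1))
        = ∫⁻ r : Set.Ioi (0:ℝ), φ (r:ℝ)
            ∂(Measure.comap Subtype.val (volume : Measure ℝ)) := by
          rw [Measure.volumeIoiPow, lintegral_withDensity_eq_lintegral_mul _
            (by exact (measurable_subtype_coe.pow_const (n-1)).ennreal_ofReal) hψm]
          rfl
      _ = ∫⁻ t in Set.Ioi (0:ℝ), φ t := lintegral_subtype_comap measurableSet_Ioi φ
      _ = ∫⁻ t in Set.Ioi (0:ℝ), (Set.Iio R).indicator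
            (fun t => ENNReal.ofReal (t ^ (n-1)) * ENNReal.ofReal (t ^ (-σ))) t := by
          apply lintegral_congr
          intro t
          rw [hφdef]
          by_cases h : t < R
          · simp [Set.indicator_of_mem (Set.mem_Iio.2 h), if_pos h]
          · simp [Set.indicator_of_notMem (fun hh => h (Set.mem_Iio.1 hh)), if_neg h]
      _ = ∫⁻ t in Set.Ioo (0:ℝ) R,
            ENNReal.ofReal (t ^ (n-1)) * ENNReal.ofReal (t ^ (-σ)) := by
          rw [lintegral_indicator measurableSet_Iio, Measure.restrict_restrict measurableSet_Iio,
            Set.Iio_inter_Ioi]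
      _ = ∫⁻ t in Set.Ioo (0:ℝ) R, ENNReal.ofReal (t ^ (δ-1)) := by
          apply setLIntegral_congr_fun measurableSet_Ioo
          intro t ht
          beta_reduce
          rw [← ENNReal.ofReal_mul (pow_nonneg ht.1.le _),
            show (t:ℝ) ^ (n-1) = t ^ (((n-1:ℕ)):ℝ) from (Real.rpow_natCast t (n-1)).symm,
            ← Real.rpow_add ht.1]
          congr 1
          have : (((n-1:ℕ)):ℝ) = (n:ℝ) - 1 := by
            rw [Nat.cast_sub (by omega), Nat.cast_one]
          rw [this, hδdef]
          ring
      _ = ENNReal.ofReal (R ^ δ / δ) := radial_lintegral δ R hδpos hR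
  -- put everything together
  calc ∫⁻ x in ball (0:EuclideanSpace ℝ (Fin n)) R, F x
      = ∫⁻ x, G x := hball
    _ = ∫⁻ r : Set.Ioi (0:ℝ),
          (∫⁻ x' : sphere (0:EuclideanSpace ℝ (Fin n)) 1,
            G ((r:ℝ) • (x' : EuclideanSpace ℝ (Fin n)))
            ∂(volume : Measure (EuclideanSpace ℝ (Fin n))).toSphere)
          ∂(Measure.volumeIoiPow (n-1)) := hpolar
    _ ≤ ∫⁻ r : Set.Ioi (0:ℝ), c * ENNReal.ofReal C * P * ψ r
          ∂(Measure.volumeIoiPow (n-1)) := lintegral_mono hbound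
    _ = c * ENNReal.ofReal C * P * ∫⁻ r : Set.Ioi (0:ℝ), ψ r
          ∂(Measure.volumeIoiPow (n-1)) := lintegral_const_mul _ hψm
    _ = c * ENNReal.ofReal C * P * ENNReal.ofReal (R ^ δ / δ) := by rw [hrad]
    _ = ENNReal.ofReal (c.toReal * C / δ * R ^ δ) * P := by
        rw [show c = ENNReal.ofReal c.toReal from (ENNReal.ofReal_toReal hctop).symm]
        rw [show ENNReal.ofReal c.toReal * ENNReal.ofReal C * P * ENNReal.ofReal (R ^ δ / δ)
            = (ENNReal.ofReal c.toReal * ENNReal.ofReal C * ENNReal.ofReal (R ^ δ / δ)) * P by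
          ring]
        rw [← ENNReal.ofReal_mul ENNReal.toReal_nonneg,
          ← ENNReal.ofReal_mul (by positivity)]
        congr 2
        field_simp
        rw [ENNReal.toReal_ofReal ENNReal.toReal_nonneg]
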